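/- If k,ℓ,s,t are natural numbers with k > ℓ, 2s ≤ k, 2t ≤ ℓ, and 0 ≤ s - t ≤ k - ℓ, then δ_{k,ℓ;s,t} > 0, where δ_{k,ℓ;s,t} = (1/(n(k-ℓ)))·((k-ℓ+t-s)(k+ℓ-2(s+t)+n-1) + (s-t)(k+ℓ+1) + 2(kt-ℓs)) and n ≥ 1. -/
import Mathlib


noncomputable section

/-- The eigenvalue γ_{k,s} of the Casimir operator C_δ:
γ_{k,s} = 2s(n + 2(k-s-1)) + 2k(1 + n(δ-1) - k) - n²δ(δ-1). -/
def gammaKS (n k s : ℕ) (δ : ℝ) : ℝ :=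
  2 * (s:ℝ) * ((n:ℝ) + 2 * ((k:ℝ) - (s:ℝ) - 1))
    + 2 * (k:ℝ) * (1 + (n:ℝ) * (δ - 1) - (k:ℝ))
    - (n:ℝ)^2 * δ * (δ - 1)

/-- The resonance δ_{k,ℓ;s,t} = (1/(n(k-ℓ)))·((k-ℓ+t-s)(k+ℓ-2(s+t)+n-1)
+ (s-t)(k+ℓ+1) + 2(kt-ℓs)). -/
def deltaRes (n k l s t : ℕ) : ℝ :=
  (1 / ((n:ℝ) * ((k:ℝ) - (l:ℝ)))) *
    ( ((k:ℝ) - (l:ℝ) + (t:ℝ) - (s:ℝ)) * ((k:ℝ) + (l:ℝ) - 2 * ((s:ℝ) + (t:ℝ)) + (n:ℝ) - 1)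
      + ((s:ℝ) - (t:ℝ)) * ((k:ℝ) + (l:ℝ) + 1)
      + 2 * ((k:ℝ) * (t:ℝ) - (l:ℝ) * (s:ℝ)) )

/-- if k > ℓ, 2s ≤ k, 2t ≤ ℓ and 0 ≤ s - t ≤ k - ℓ, then δ_{k,ℓ;s,t} > 0. -/
theorem stmt7 (n : ℕ) (hn : 1 ≤ n) (k l s t : ℕ) (hkl : l < k)
    (hs : 2 * s ≤ k) (ht : 2 * t ≤ l)
    (hts : t ≤ s) (hstkl : (s:ℝ) - (t:ℝ) ≤ (k:ℝ) - (l:ℝ)) :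
    0 < deltaRes n k l s t := by
  have hnR : (1:ℝ) ≤ (n:ℝ) := by exact_mod_cast hn
  have hklR : (l:ℝ) < (k:ℝ) := by exact_mod_cast hkl
  have hsR : 2 * (s:ℝ) ≤ (k:ℝ) := by exact_mod_cast hs
  have htR : 2 * (t:ℝ) ≤ (l:ℝ) := by exact_mod_cast ht
  have htsR : (t:ℝ) ≤ (s:ℝ) := by exact_mod_cast hts
  have hd : (0:ℝ) < (n:ℝ) * ((k:ℝ) - (l:ℝ)) := by nlinarith
  have hklR1 : (l:ℝ) + 1 ≤ (k:ℝ) := by exact_mod_cast hkl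
  have hnum : (0:ℝ) <
      ((k:ℝ) - (l:ℝ) + (t:ℝ) - (s:ℝ)) * ((k:ℝ) + (l:ℝ) - 2 * ((s:ℝ) + (t:ℝ)) + (n:ℝ) - 1)
      + ((s:ℝ) - (t:ℝ)) * ((k:ℝ) + (l:ℝ) + 1)
      + 2 * ((k:ℝ) * (t:ℝ) - (l:ℝ) * (s:ℝ)) := by
    nlinarith [mul_nonneg (sub_nonneg.2 hstkl) (by linarith : (0:ℝ) ≤ (l:ℝ) - 2*(t:ℝ)),
      mul_nonneg (sub_nonneg.2 hstkl) (by linarith : (0:ℝ) ≤ (t:ℝ)),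
      mul_nonneg (sub_nonneg.2 hstkl) (sub_nonneg.2 hstkl),
      mul_nonneg (sub_nonneg.2 hstkl) (by linarith : (0:ℝ) ≤ (n:ℝ) - 1),
      mul_nonneg (sub_nonneg.2 htsR) (sub_nonneg.2 htsR),
      mul_nonneg (sub_nonneg.2 htsR) (by linarith : (0:ℝ) ≤ (t:ℝ))]
  unfold deltaRes
  exact mul_pos (by positivity) hnum
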